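/- Let p(x) = a_{i_1}x^{i_1} + a_{i_2}x^{i_2} + ... + a_{i_r}x^{i_r} be a real polynomial with 0 = i_1 < i_2 < ... < i_r and all coefficients a_{i_j} nonzero. If m is the number of indices j in {1, ..., r-1} with a_{i_j} a_{i_{j+1}} < 0 (the number of variations of sign), then p has at most m distinct positive real roots. -/

import Mathlib

open Finset

lemma drs_hasDerivAt_sum_rpow (r : ℕ) (a b : ℕ → ℝ) (x : ℝ) (hx : 0 < x) :
    HasDerivAt (fun y : ℝ => ∑ l ∈ Finset.range r, a l * y ^ (b l))
      (∑ l ∈ Finset.range r, a l * (b l) * x ^ (b l - 1)) x := by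
  have h : ∀ l ∈ Finset.range r,
      HasDerivAt (fun y : ℝ => a l * y ^ (b l)) (a l * (b l) * x ^ (b l - 1)) x := by
    intro l _
    have := (Real.hasDerivAt_rpow_const (p := b l) (Or.inl hx.ne')).const_mul (a l)
    simpa [mul_assoc] using this
  simpa using HasDerivAt.fun_sum h

lemma drs_rolle_finset (f f' : ℝ → ℝ) (hf : ∀ x : ℝ, 0 < x → HasDerivAt f (f' x) x) :
    ∀ (n : ℕ) (S : Finset ℝ), S.card = n → (∀ x ∈ S, 0 < x ∧ f x = 0) →
    ∃ T : Finset ℝ, (∀ y ∈ T, (0 < y ∧ f' y = 0) ∧ ∃ x ∈ S, x < y) ∧ S.card ≤ T.card + 1 := by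
  intro n
  induction n with
  | zero =>
    intro S hcard _
    exact ⟨∅, by simp, by simp [hcard]⟩
  | succ n ih =>
    intro S hcard hS
    have hne : S.Nonempty := Finset.card_pos.mp (by omega)
    set x0 := S.min' hne with hx0def
    have hx0S : x0 ∈ S := S.min'_mem hne
    set S' := S.erase x0 with hS'def
    have hcard' : S'.card = n := by
      rw [hS'def, Finset.card_erase_of_mem hx0S, hcard]; omega
    obtain ⟨T', hT', hcardT'⟩ := ih S' hcard' (fun x hx => hS x (Finset.mem_of_mem_erase hx))
    rcases S'.eq_empty_or_nonempty with hS'e | hS'ne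
    · refine ⟨∅, by simp, ?_⟩
      have : S'.card = 0 := by rw [hS'e]; simp
      omega
    · set x1 := S'.min' hS'ne with hx1def
      have hx1S' : x1 ∈ S' := S'.min'_mem hS'ne
      have hx1S : x1 ∈ S := Finset.mem_of_mem_erase hx1S'
      have hx0pos : 0 < x0 := (hS x0 hx0S).1
      have h01 : x0 < x1 := by
        have hle : x0 ≤ x1 := S.min'_le x1 hx1S
        have hne' : x1 ≠ x0 := Finset.ne_of_mem_erase hx1S'
        exact lt_of_le_of_ne hle (Ne.symm hne')
      have hcont : ContinuousOn f (Set.Icc x0 x1) := by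
        intro y hy
        exact (hf y (lt_of_lt_of_le hx0pos hy.1)).continuousAt.continuousWithinAt
      have hderiv : ∀ y ∈ Set.Ioo x0 x1, HasDerivAt f (f' y) y :=
        fun y hy => hf y (lt_trans hx0pos hy.1)
      obtain ⟨z, hz, hz0⟩ := exists_hasDerivAt_eq_zero h01 hcont
        (by rw [(hS x0 hx0S).2, (hS x1 hx1S).2]) hderiv
      have hzT' : z ∉ T' := by
        intro hzmem
        obtain ⟨x, hxS', hxz⟩ := (hT' z hzmem).2
        have : x1 ≤ x := S'.min'_le x hxS'
        have : x1 < z := lt_of_le_of_lt this hxz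
        exact absurd hz.2 (not_lt.mpr this.le)
      refine ⟨insert z T', ?_, ?_⟩
      · intro y hy
        rcases Finset.mem_insert.mp hy with rfl | hy'
        · exact ⟨⟨lt_trans hx0pos hz.1, hz0⟩, x0, hx0S, hz.1⟩
        · obtain ⟨x, hxS', hxz⟩ := (hT' y hy').2
          exact ⟨(hT' y hy').1, x, Finset.mem_of_mem_erase hxS', hxz⟩
      · rw [Finset.card_insert_of_notMem hzT']
        omega

lemma drs_key (m : ℕ) : ∀ (r : ℕ), 0 < r → ∀ (a b : ℕ → ℝ),
    (∀ j k : ℕ, j < k → k < r → b j < b k) →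
    (∀ j : ℕ, j < r → a j ≠ 0) →
    ((Finset.range (r - 1)).filter (fun l => a l * a (l + 1) < 0)).card = m →
    ∀ S : Finset ℝ, (∀ x ∈ S, 0 < x ∧ (∑ l ∈ Finset.range r, a l * x ^ (b l)) = 0) →
    S.card ≤ m := by
  induction m with
  | zero =>
    intro r hr a b hb ha hfil S hS
    -- no sign changes: all coefficients have the sign of a 0
    have hnochange : ∀ l : ℕ, l + 1 < r → 0 < a l * a (l + 1) := by
      intro l hl
      have hlmem : l ∈ Finset.range (r - 1) := Finset.mem_range.mpr (by omega)
      have : l ∉ (Finset.range (r - 1)).filter (fun l => a l * a (l + 1) < 0) := by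
        rw [Finset.card_eq_zero.mp hfil]; simp
      have hnot : ¬ (a l * a (l + 1) < 0) := by
        intro h; exact this (Finset.mem_filter.mpr ⟨hlmem, h⟩)
      have hne : a l * a (l + 1) ≠ 0 := mul_ne_zero (ha l (by omega)) (ha (l + 1) hl)
      cases lt_or_gt_of_ne hne with
      | inl h => exact absurd h hnot
      | inr h => exact h
    have hpos : ∀ l : ℕ, l < r → 0 < a 0 * a l := by
      intro l
      induction l with
      | zero => intro _; exact mul_self_pos.mpr (ha 0 hr)
      | succ l ihl =>
        intro hl
        have h1 := ihl (by omega)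
        have h2 := hnochange l hl
        have h3 : (0:ℝ) < a l ^ 2 := by
          have := ha l (by omega); positivity
        nlinarith
    have hSempty : S = ∅ := by
      rw [Finset.eq_empty_iff_forall_notMem]
      intro x hx
      obtain ⟨hxpos, hxroot⟩ := hS x hx
      have hsum : (0:ℝ) < ∑ l ∈ Finset.range r, (a 0 * a l) * x ^ (b l) := by
        apply Finset.sum_pos
        · intro l hl
          exact mul_pos (hpos l (Finset.mem_range.mp hl)) (Real.rpow_pos_of_pos hxpos _)
        · exact Finset.nonempty_range_iff.mpr hr.ne'
      have : ∑ l ∈ Finset.range r, (a 0 * a l) * x ^ (b l)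
          = a 0 * ∑ l ∈ Finset.range r, a l * x ^ (b l) := by
        rw [Finset.mul_sum]; apply Finset.sum_congr rfl; intro l _; ring
      rw [this, hxroot, mul_zero] at hsum
      exact lt_irrefl _ hsum
    rw [hSempty]; simp
  | succ m ih =>
    intro r hr a b hb ha hfil S hS
    set Fil := (Finset.range (r - 1)).filter (fun l => a l * a (l + 1) < 0) with hFil
    have hFne : Fil.Nonempty := Finset.card_pos.mp (by omega)
    set j := Fil.min' hFne with hjdef
    have hjmem : j ∈ Fil := Fil.min'_mem hFne
    have hjr : j < r - 1 := Finset.mem_range.mp (Finset.mem_filter.mp hjmem).1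
    have hjsign : a j * a (j + 1) < 0 := (Finset.mem_filter.mp hjmem).2
    have hj1r : j + 1 < r := by omega
    set c : ℝ := (b j + b (j + 1)) / 2 with hcdef
    have hbjj1 : b j < b (j + 1) := hb j (j + 1) (by omega) hj1r
    have hcgt : b j < c := by rw [hcdef]; linarith
    have hclt : c < b (j + 1) := by rw [hcdef]; linarith
    have hblt : ∀ l : ℕ, l ≤ j → b l < c := by
      intro l hl
      rcases eq_or_lt_of_le hl with rfl | h
      · exact hcgt
      · exact lt_trans (hb l j h (by omega)) hcgt
    have hbgt : ∀ l : ℕ, j + 1 ≤ l → l < r → c < b l := by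
      intro l hl hlr
      rcases eq_or_lt_of_le hl with h | h
      · rw [← h]; exact hclt
      · exact lt_trans hclt (hb (j + 1) l h hlr)
    set a' : ℕ → ℝ := fun l => a l * (b l - c) with ha'def
    set b' : ℕ → ℝ := fun l => b l - c - 1 with hb'def
    have ha' : ∀ l : ℕ, l < r → a' l ≠ 0 := by
      intro l hl
      apply mul_ne_zero (ha l hl)
      rcases le_or_gt l j with h | h
      · exact ne_of_lt (by linarith [hblt l h])
      · exact ne_of_gt (by linarith [hbgt l h hl])
    have hb' : ∀ p q : ℕ, p < q → q < r → b' p < b' q := by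
      intro p q hpq hqr
      simp only [hb'def]
      linarith [hb p q hpq hqr]
    -- sign-change set of a' is Fil.erase j
    have hfil' : (Finset.range (r - 1)).filter (fun l => a' l * a' (l + 1) < 0)
        = Fil.erase j := by
      ext l
      simp only [Finset.mem_filter, Finset.mem_erase, hFil, Finset.mem_range]
      constructor
      · rintro ⟨hlr, hlsign⟩
        have hprod : a' l * a' (l + 1)
            = (a l * a (l + 1)) * ((b l - c) * (b (l + 1) - c)) := by
          simp only [ha'def]; ring
        rcases lt_trichotomy l j with h | rfl | h
        · -- l < j : both corrections negative, but a l * a(l+1) > 0 (l before first change)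
          exfalso
          have hc1 : b l - c < 0 := by linarith [hblt l (by omega)]
          have hc2 : b (l + 1) - c < 0 := by linarith [hblt (l + 1) (by omega)]
          have hlnot : l ∉ Fil := fun hmem => absurd (Fil.min'_le l hmem) (by omega)
          have hnotsign : ¬ (a l * a (l + 1) < 0) := by
            intro hcon
            exact hlnot (Finset.mem_filter.mpr ⟨Finset.mem_range.mpr hlr, hcon⟩)
          have hne : a l * a (l + 1) ≠ 0 :=
            mul_ne_zero (ha l (by omega)) (ha (l + 1) (by omega))
          have hgt : 0 < a l * a (l + 1) := by
            cases lt_or_gt_of_ne hne with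
            | inl hx => exact absurd hx hnotsign
            | inr hx => exact hx
          have : 0 < a' l * a' (l + 1) :=
            hprod ▸ mul_pos hgt (mul_pos_of_neg_of_neg hc1 hc2)
          linarith
        · -- l = j : correction negative, a j * a(j+1) < 0, so product positive
          exfalso
          have hc1 : b j - c < 0 := by linarith
          have hc2 : (0:ℝ) < b (j + 1) - c := by linarith
          have : 0 < a' j * a' (j + 1) :=
            hprod ▸ mul_pos_of_neg_of_neg hjsign (mul_neg_of_neg_of_pos hc1 hc2)
          linarith
        · -- l > j : both corrections positive
          have hc1 : (0:ℝ) < b l - c := by linarith [hbgt l (by omega) (by omega)]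
          have hc2 : (0:ℝ) < b (l + 1) - c := by linarith [hbgt (l + 1) (by omega) (by omega)]
          refine ⟨by omega, hlr, ?_⟩
          have hd : 0 < (b l - c) * (b (l + 1) - c) := mul_pos hc1 hc2
          by_contra hcon
          push_neg at hcon
          have : 0 ≤ a' l * a' (l + 1) := hprod ▸ mul_nonneg hcon hd.le
          linarith
      · rintro ⟨hlj, hlr, hlsign⟩
        refine ⟨hlr, ?_⟩
        have hprod : a' l * a' (l + 1)
            = (a l * a (l + 1)) * ((b l - c) * (b (l + 1) - c)) := by
          simp only [ha'def]; ring
        rcases lt_trichotomy l j with h | h | h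
        · -- l < j : impossible since j is the least sign change
          exfalso
          have hlnot : l ∉ Fil := fun hmem => absurd (Fil.min'_le l hmem) (by omega)
          exact hlnot (Finset.mem_filter.mpr ⟨Finset.mem_range.mpr hlr, hlsign⟩)
        · exact absurd h hlj
        · have hc1 : (0:ℝ) < b l - c := by linarith [hbgt l (by omega) (by omega)]
          have hc2 : (0:ℝ) < b (l + 1) - c := by linarith [hbgt (l + 1) (by omega) (by omega)]
          have hd : 0 < (b l - c) * (b (l + 1) - c) := mul_pos hc1 hc2
          exact hprod ▸ mul_neg_of_neg_of_pos hlsign hd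
    have hcard' : ((Finset.range (r - 1)).filter (fun l => a' l * a' (l + 1) < 0)).card = m := by
      rw [hfil', Finset.card_erase_of_mem hjmem, hfil]; omega
    -- the auxiliary function and its derivative
    set G : ℝ → ℝ := fun x => ∑ l ∈ Finset.range r, a l * x ^ (b l - c) with hGdef
    set G' : ℝ → ℝ := fun x => ∑ l ∈ Finset.range r, a' l * x ^ (b' l) with hG'def
    have hderiv : ∀ x : ℝ, 0 < x → HasDerivAt G (G' x) x := by
      intro x hx
      have := drs_hasDerivAt_sum_rpow r a (fun l => b l - c) x hx
      have heq : (∑ l ∈ Finset.range r, a l * (b l - c) * x ^ (b l - c - 1)) = G' x := by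
        simp only [hG'def, ha'def, hb'def]
      rw [← heq]
      exact this
    have hGroots : ∀ x ∈ S, 0 < x ∧ G x = 0 := by
      intro x hx
      obtain ⟨hxpos, hxroot⟩ := hS x hx
      refine ⟨hxpos, ?_⟩
      have : G x = (∑ l ∈ Finset.range r, a l * x ^ (b l)) / x ^ c := by
        simp only [hGdef]
        rw [eq_div_iff (ne_of_gt (Real.rpow_pos_of_pos hxpos c)), Finset.sum_mul]
        apply Finset.sum_congr rfl
        intro l _
        rw [mul_assoc, ← Real.rpow_add hxpos]
        congr 1
        ring
      rw [this, hxroot, zero_div]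
    obtain ⟨T, hT, hcardT⟩ := drs_rolle_finset G G' hderiv S.card S rfl hGroots
    have hTroots : ∀ y ∈ T, 0 < y ∧ (∑ l ∈ Finset.range r, a' l * y ^ (b' l)) = 0 := by
      intro y hy
      exact ⟨(hT y hy).1.1, (hT y hy).1.2⟩
    have := ih r hr a' b' hb' ha' hcard' T hTroots
    omega

/-- Descartes' rule of signs (first part): a real polynomial
`p(x) = a_{i_1} x^{i_1} + ⋯ + a_{i_r} x^{i_r}` with `0 = i_1 < i_2 < ⋯ < i_r`
and all coefficients nonzero has at most `m` distinct positive real roots,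
where `m` is the number of sign variations of the coefficient sequence. -/
theorem descartes_rule_of_signs_upper_bound
    (r : ℕ) (hr : 0 < r) (i : ℕ → ℕ) (a : ℕ → ℝ)
    (hi0 : i 0 = 0)
    (hmono : ∀ j k : ℕ, j < k → k < r → i j < i k)
    (ha : ∀ j : ℕ, j < r → a j ≠ 0)
    (m : ℕ)
    (hm : m = ((Finset.range (r - 1)).filter (fun j => a j * a (j + 1) < 0)).card)
    (p : ℝ → ℝ)
    (hp : ∀ x : ℝ, p x = ∑ j ∈ Finset.range r, a j * x ^ (i j)) :
    ∀ S : Finset ℝ, (∀ x ∈ S, 0 < x ∧ p x = 0) → S.card ≤ m := by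
  intro S hS
  apply drs_key m r hr a (fun j => (i j : ℝ))
    (fun j k hjk hkr => Nat.cast_lt.mpr (hmono j k hjk hkr)) ha hm.symm
  intro x hx
  obtain ⟨hxpos, hxroot⟩ := hS x hx
  refine ⟨hxpos, ?_⟩
  rw [hp x] at hxroot
  rw [← hxroot]
  apply Finset.sum_congr rfl
  intro l _
  rw [Real.rpow_natCast]
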